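/- Assume E(T^2) < ∞. Then lim_{n→∞} (1/n) E( T_{τ^{-1}_n}^2 ) = 0, where T_{τ^{-1}_n} denotes the random variable T_m evaluated at the random index m = τ^{-1}_n. -/

import Mathlib

open MeasureTheory ProbabilityTheory Filter

noncomputable section

/-- The `2d` unit vectors `±e_i` of `ℤ^d ⊆ ℝ^d`. -/
def unitVecs (d : ℕ) : Set (EuclideanSpace ℝ (Fin d)) :=
  {v | ∃ i : Fin d, v = EuclideanSpace.single i 1 ∨ v = EuclideanSpace.single i (-1)}

/-- The random times `τ_n = T_1 + ⋯ + T_n` (with `τ_0 = 0`). -/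
def tauT {Ω : Type} (T : ℕ → Ω → ℕ) (n : ℕ) (ω : Ω) : ℕ :=
  ∑ k ∈ Finset.Icc 1 n, T k ω

/-- The inverse time change `τ⁻¹_n = inf {m ≥ 1 : τ_m ≥ n}`. -/
def tauInv {Ω : Type} (T : ℕ → Ω → ℕ) (n : ℕ) (ω : Ω) : ℕ :=
  sInf {m : ℕ | 1 ≤ m ∧ n ≤ tauT T m ω}

/-- The σ-field `F_k = σ(D_1, T_1, …, D_k, T_k)`. -/
def walkSigma {Ω β : Type} [MeasurableSpace Ω] [MeasurableSpace β]
    (D : ℕ → Ω → β) (T : ℕ → Ω → ℕ) (k : ℕ) : MeasurableSpace Ω :=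
  ⨆ m ∈ Finset.Icc 1 k,
    (MeasurableSpace.comap (D m) inferInstance ⊔ MeasurableSpace.comap (T m) inferInstance)

/-- The filtration `(F_{n+1})_{n ≥ 0}`, i.e. `(F_n)_{n ≥ 1}` reindexed from `0`. -/
def walkFiltration {Ω β : Type} [m0 : MeasurableSpace Ω] [MeasurableSpace β]
    (D : ℕ → Ω → β) (T : ℕ → Ω → ℕ)
    (measD : ∀ m, Measurable (D m)) (measT : ∀ m, Measurable (T m)) :
    Filtration ℕ m0 where
  seq n := walkSigma D T (n + 1)
  mono' := by
    intro i j hij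
    refine iSup_le fun m => iSup_le fun hm => ?_
    refine le_iSup₂_of_le m ?_ le_rfl
    simp only [Finset.mem_Icc] at hm ⊢
    omega
  le' := by
    intro n
    refine iSup_le fun m => iSup_le fun _ => sup_le ?_ ?_
    · exact (measD m).comap_le
    · exact (measT m).comap_le

section helpers
variable {Ω β : Type}

theorem tauT_mono (T : ℕ → Ω → ℕ) (ω : Ω) : Monotone fun m => tauT T m ω := by
  intro a b hab
  exact Finset.sum_le_sum_of_subset (Finset.Icc_subset_Icc_right hab)

theorem self_le_tauT (T : ℕ → Ω → ℕ) (T_pos : ∀ m ω, 1 ≤ T m ω) (n : ℕ) (ω : Ω) :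
    n ≤ tauT T n ω := by
  calc n = ∑ _k ∈ Finset.Icc 1 n, 1 := by simp
  _ ≤ tauT T n ω := Finset.sum_le_sum fun k _ => T_pos k ω

theorem tauInv_le_iff (T : ℕ → Ω → ℕ) (T_pos : ∀ m ω, 1 ≤ T m ω) (n k : ℕ) (hk : 1 ≤ k) :
    {ω | tauInv T n ω ≤ k} = {ω | n ≤ tauT T k ω} := by
  ext ω
  simp only [Set.mem_setOf_eq, tauInv]
  constructor
  · intro hle
    rcases Nat.eq_zero_or_pos n with hn | hn
    · omega
    · have hne : {m : ℕ | 1 ≤ m ∧ n ≤ tauT T m ω}.Nonempty :=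
        ⟨n, hn, self_le_tauT T T_pos n ω⟩
      obtain ⟨h1, h2⟩ := Nat.sInf_mem hne
      exact le_trans h2 (tauT_mono T ω hle)
  · intro hle
    exact Nat.sInf_le ⟨hk, hle⟩

theorem measurable_tauT_walkSigma [MeasurableSpace Ω] [MeasurableSpace β]
    (D : ℕ → Ω → β) (T : ℕ → Ω → ℕ) (k : ℕ) :
    Measurable[walkSigma D T k] (tauT T k) := by
  apply Finset.measurable_sum
  intro m hm
  refine measurable_iff_comap_le.2 (le_trans ?_ (le_iSup₂_of_le m hm le_rfl))
  exact le_sup_right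

theorem measurableSet_tauInv_le [MeasurableSpace Ω] [MeasurableSpace β]
    (D : ℕ → Ω → β) (T : ℕ → Ω → ℕ) (T_pos : ∀ m ω, 1 ≤ T m ω) (n k : ℕ) (hk : 1 ≤ k) :
    MeasurableSet[walkSigma D T k] {ω | tauInv T n ω ≤ k} := by
  rw [tauInv_le_iff T T_pos n k hk]
  exact measurable_tauT_walkSigma D T k measurableSet_Ici

end helpers

/-- The σ-field `{A : A ∩ {σ ≤ k} ∈ F_k for all k = 1, …, n}` associated with a
random time `σ` bounded by `n`. -/
def stoppedSigma {Ω : Type} (F : ℕ → MeasurableSpace Ω) (σf : Ω → ℕ) (n : ℕ)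
    (h : ∀ k, 1 ≤ k → k ≤ n → MeasurableSet[F k] {ω | σf ω ≤ k}) : MeasurableSpace Ω where
  MeasurableSet' A := ∀ k, 1 ≤ k → k ≤ n → MeasurableSet[F k] (A ∩ {ω | σf ω ≤ k})
  measurableSet_empty := fun k _ _ => by
    simp
  measurableSet_compl := fun A hA k hk1 hk2 => by
    have hs : MeasurableSet[F k] {ω | σf ω ≤ k} := h k hk1 hk2
    have heq : Aᶜ ∩ {ω | σf ω ≤ k} = {ω | σf ω ≤ k} \ (A ∩ {ω | σf ω ≤ k}) := by
      ext ω; by_cases hω : σf ω ≤ k <;> simp [hω]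
    rw [heq]
    exact hs.diff (hA k hk1 hk2)
  measurableSet_iUnion := fun s hs k hk1 hk2 => by
    rw [Set.iUnion_inter]
    exact MeasurableSet.iUnion fun i => hs i k hk1 hk2

/-- The σ-field `F_{τ⁻¹_n} = {A : A ∩ {τ⁻¹_n ≤ k} ∈ F_k for all k = 1, …, n}`. -/
def Fstop {Ω β : Type} [MeasurableSpace Ω] [MeasurableSpace β]
    (D : ℕ → Ω → β) (T : ℕ → Ω → ℕ) (T_pos : ∀ m ω, 1 ≤ T m ω) (n : ℕ) :
    MeasurableSpace Ω :=
  stoppedSigma (walkSigma D T) (tauInv T n) n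
    (fun k hk1 _ => measurableSet_tauInv_le D T T_pos n k hk1)

section mainproof
variable {Ω : Type} [MeasurableSpace Ω] {μ : Measure Ω}

theorem tauInv_mem {T : ℕ → Ω → ℕ} (T_pos : ∀ m ω, 1 ≤ T m ω) (n : ℕ) (ω : Ω) :
    1 ≤ tauInv T n ω ∧ n ≤ tauT T (tauInv T n ω) ω := by
  have hne : {m : ℕ | 1 ≤ m ∧ n ≤ tauT T m ω}.Nonempty := by
    rcases Nat.eq_zero_or_pos n with h | h
    · exact ⟨1, le_refl 1, by omega⟩
    · exact ⟨n, h, self_le_tauT T T_pos n ω⟩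
  exact Nat.sInf_mem hne

theorem tauInv_le_self {T : ℕ → Ω → ℕ} (T_pos : ∀ m ω, 1 ≤ T m ω) {n : ℕ} (hn : 1 ≤ n)
    (ω : Ω) : tauInv T n ω ≤ n :=
  Nat.sInf_le ⟨hn, self_le_tauT T T_pos n ω⟩

theorem measurable_tauT {T : ℕ → Ω → ℕ} (measT : ∀ m, Measurable (T m)) (k : ℕ) :
    Measurable (tauT T k) :=
  Finset.measurable_sum _ fun m _ => measT m

theorem measurableSet_tauInvLe {T : ℕ → Ω → ℕ} (measT : ∀ m, Measurable (T m))
    (T_pos : ∀ m ω, 1 ≤ T m ω) (n j : ℕ) :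
    MeasurableSet {ω | tauInv T n ω ≤ j} := by
  rcases Nat.eq_zero_or_pos j with hj | hj
  · have : {ω | tauInv T n ω ≤ j} = ∅ := by
      ext ω
      have := (tauInv_mem T_pos n ω).1
      simp only [Set.mem_setOf_eq, Set.mem_empty_iff_false, iff_false]
      omega
    rw [this]; exact MeasurableSet.empty
  · rw [tauInv_le_iff T T_pos n j hj]
    exact measurable_tauT measT j measurableSet_Ici

theorem measurable_tauInv {T : ℕ → Ω → ℕ} (measT : ∀ m, Measurable (T m))
    (T_pos : ∀ m ω, 1 ≤ T m ω) (n : ℕ) : Measurable (tauInv T n) := by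
  apply measurable_to_countable'
  intro k
  rcases Nat.eq_zero_or_pos k with hk | hk
  · have : tauInv T n ⁻¹' {k} = ∅ := by
      ext ω
      have := (tauInv_mem T_pos n ω).1
      simp only [Set.mem_preimage, Set.mem_singleton_iff, Set.mem_empty_iff_false, iff_false]
      omega
    rw [this]; exact MeasurableSet.empty
  · have : tauInv T n ⁻¹' {k} = {ω | tauInv T n ω ≤ k} \ {ω | tauInv T n ω ≤ k - 1} := by
      ext ω
      simp only [Set.mem_preimage, Set.mem_singleton_iff, Set.mem_diff, Set.mem_setOf_eq]
      omega
    rw [this]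
    exact (measurableSet_tauInvLe measT T_pos n k).diff (measurableSet_tauInvLe measT T_pos n (k - 1))

theorem measurable_Tstopped {T : ℕ → Ω → ℕ} (measT : ∀ m, Measurable (T m))
    (T_pos : ∀ m ω, 1 ≤ T m ω) (n : ℕ) :
    Measurable (fun ω => T (tauInv T n ω) ω) := by
  apply measurable_to_countable'
  intro y
  have : (fun ω => T (tauInv T n ω) ω) ⁻¹' {y}
      = ⋃ k, (tauInv T n ⁻¹' {k} ∩ T k ⁻¹' {y}) := by
    ext ω
    simp only [Set.mem_preimage, Set.mem_singleton_iff, Set.mem_iUnion, Set.mem_inter_iff]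
    constructor
    · intro h; exact ⟨tauInv T n ω, rfl, h⟩
    · rintro ⟨k, hk, hy⟩; rw [hk]; exact hy
  rw [this]
  exact MeasurableSet.iUnion fun k =>
    ((measurable_tauInv measT T_pos n) (MeasurableSet.singleton k)).inter
      ((measT k) (MeasurableSet.singleton y))

end mainproof

/-- If `E(T²) < ∞`, then `lim_{n→∞} (1/n) E(T_{τ⁻¹_n}²) = 0`. -/
theorem stopped_time_square_negligible
    {Ω : Type} [MeasurableSpace Ω] {μ : Measure Ω} [IsProbabilityMeasure μ]
    (T : ℕ → Ω → ℕ)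
    (measT : ∀ m, Measurable (T m))
    (T_pos : ∀ m ω, 1 ≤ T m ω)
    (T_iid : iIndepFun (fun m : ℕ => T (m + 1)) μ)
    (T_ident : ∀ m : ℕ, IdentDistrib (T (m + 1)) (T 1) μ μ)
    (hT2 : Integrable (fun ω => (T 1 ω : ℝ) ^ 2) μ) :
    Tendsto (fun n : ℕ => (1 / (n : ℝ)) * ∫ ω, (T (tauInv T n ω) ω : ℝ) ^ 2 ∂μ) atTop
      (nhds 0) := by
  have hsnn : ∀ (a : ℕ) (g : Ω → ℕ) (ω : Ω),
      (0:ℝ) ≤ if (a:ℝ) < (g ω : ℝ)^2 then (g ω : ℝ)^2 else 0 := by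
    intro a g ω; split <;> positivity
  -- integrability of T m squared
  have hint_sq : ∀ m, 1 ≤ m → Integrable (fun ω => (T m ω : ℝ)^2) μ := by
    intro m hm
    obtain ⟨k, rfl⟩ : ∃ k, m = k + 1 := ⟨m - 1, by omega⟩
    exact ((T_ident k).comp (measurable_from_top (f := fun x : ℕ => (x:ℝ)^2))).integrable_iff.mpr hT2
  -- the truncated second moment
  set h : ℕ → ℕ → ℝ := fun a x => if (a:ℝ) < (x:ℝ)^2 then (x:ℝ)^2 else 0 with hh
  set c : ℕ → ℝ := fun a => ∫ ω, h a (T 1 ω) ∂μ with hc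
  have hint_h : ∀ a m, 1 ≤ m → Integrable (fun ω => h a (T m ω)) μ := by
    intro a m hm
    refine (hint_sq m hm).mono'
      (((measurable_from_top (f := h a)).comp (measT m)).aestronglyMeasurable) ?_
    refine Filter.Eventually.of_forall fun ω => ?_
    rw [Real.norm_eq_abs, abs_of_nonneg (hsnn a (T m) ω)]
    split
    · exact le_refl _
    · positivity
  have h_eq : ∀ a m, 1 ≤ m → ∫ ω, h a (T m ω) ∂μ = c a := by
    intro a m hm
    obtain ⟨k, rfl⟩ : ∃ k, m = k + 1 := ⟨m - 1, by omega⟩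
    exact ((T_ident k).comp (measurable_from_top (f := h a))).integral_eq
  -- measurability and integrability of the stopped square
  have hmf : ∀ n, Measurable (fun ω => (T (tauInv T n ω) ω : ℝ)^2) := fun n =>
    (measurable_from_top (f := fun x : ℕ => (x:ℝ)^2)).comp (measurable_Tstopped measT T_pos n)
  have hmem : ∀ n, 1 ≤ n → ∀ ω : Ω, tauInv T n ω ∈ Finset.Icc 1 n := by
    intro n hn ω
    exact Finset.mem_Icc.2 ⟨(tauInv_mem T_pos n ω).1, tauInv_le_self T_pos hn ω⟩
  have hint_f : ∀ n, 1 ≤ n → Integrable (fun ω => (T (tauInv T n ω) ω : ℝ)^2) μ := by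
    intro n hn
    refine Integrable.mono'
      (integrable_finset_sum (Finset.Icc 1 n)
        (fun m hm => hint_sq m (Finset.mem_Icc.1 hm).1))
      (hmf n).aestronglyMeasurable (Filter.Eventually.of_forall fun ω => ?_)
    rw [Real.norm_eq_abs, abs_of_nonneg (by positivity)]
    exact Finset.single_le_sum (f := fun m => ((T m ω : ℝ))^2)
      (fun m _ => by positivity) (hmem n hn ω)
  -- pointwise bound
  have hptwise : ∀ (a n : ℕ), 1 ≤ n → ∀ ω : Ω,
      (T (tauInv T n ω) ω : ℝ)^2 ≤ (a:ℝ) + ∑ m ∈ Finset.Icc 1 n, h a (T m ω) := by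
    intro a n hn ω
    have hsum_nn : (0:ℝ) ≤ ∑ m ∈ Finset.Icc 1 n, h a (T m ω) :=
      Finset.sum_nonneg fun m _ => hsnn a (T m) ω
    by_cases hca : (a:ℝ) < (T (tauInv T n ω) ω : ℝ)^2
    · have h1 : (T (tauInv T n ω) ω : ℝ)^2 ≤ ∑ m ∈ Finset.Icc 1 n, h a (T m ω) := by
        have := Finset.single_le_sum (f := fun m => h a (T m ω))
          (fun m _ => hsnn a (T m) ω) (hmem n hn ω)
        simpa [h, hca] using this
      have ha0 : (0:ℝ) ≤ (a:ℝ) := Nat.cast_nonneg a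
      linarith
    · push_neg at hca
      linarith
  -- key integral inequality
  have key : ∀ (a n : ℕ), 1 ≤ n →
      ∫ ω, (T (tauInv T n ω) ω : ℝ)^2 ∂μ ≤ (a:ℝ) + (n:ℝ) * c a := by
    intro a n hn
    have hintR : Integrable (fun ω => (a:ℝ) + ∑ m ∈ Finset.Icc 1 n, h a (T m ω)) μ :=
      (integrable_const _).add
        (integrable_finset_sum _ fun m hm => hint_h a m (Finset.mem_Icc.1 hm).1)
    calc ∫ ω, (T (tauInv T n ω) ω : ℝ)^2 ∂μ
        ≤ ∫ ω, ((a:ℝ) + ∑ m ∈ Finset.Icc 1 n, h a (T m ω)) ∂μ :=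
          integral_mono (hint_f n hn) hintR (hptwise a n hn)
      _ = (a:ℝ) + ∑ m ∈ Finset.Icc 1 n, ∫ ω, h a (T m ω) ∂μ := by
          rw [integral_add (integrable_const _)
            (integrable_finset_sum _ fun m hm => hint_h a m (Finset.mem_Icc.1 hm).1),
            integral_const, integral_finset_sum _
              (fun m hm => hint_h a m (Finset.mem_Icc.1 hm).1)]
          simp
      _ = (a:ℝ) + (n:ℝ) * c a := by
          rw [Finset.sum_congr rfl (fun m hm => h_eq a m (Finset.mem_Icc.1 hm).1)]
          rw [Finset.sum_const, Nat.card_Icc]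
          simp [nsmul_eq_mul]
  -- c a → 0
  have hc0 : Tendsto c atTop (nhds 0) := by
    have := MeasureTheory.tendsto_integral_filter_of_dominated_convergence
      (μ := μ) (F := fun a ω => h a (T 1 ω)) (f := fun _ => (0:ℝ))
      (bound := fun ω => (T 1 ω : ℝ)^2) (l := atTop)
      (Filter.Eventually.of_forall fun a =>
        ((measurable_from_top (f := h a)).comp (measT 1)).aestronglyMeasurable)
      (Filter.Eventually.of_forall fun a =>
        Filter.Eventually.of_forall fun ω => by
          rw [Real.norm_eq_abs, abs_of_nonneg (hsnn a (T 1) ω)]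
          split
          · exact le_refl _
          · positivity)
      hT2
      (Filter.Eventually.of_forall fun ω => by
        have hev : ∀ᶠ a in (atTop : Filter ℕ), h a (T 1 ω) = 0 := by
          filter_upwards [Filter.eventually_ge_atTop ((T 1 ω)^2)] with a ha
          have : ¬ ((a:ℝ) < (T 1 ω : ℝ)^2) := by push_cast; push_neg; exact_mod_cast ha
          simp [h, this]
        exact Tendsto.congr' (Filter.EventuallyEq.symm hev) tendsto_const_nhds)
    simpa using this
  -- conclusion
  rw [Metric.tendsto_atTop]
  intro ε hε
  obtain ⟨a, ha⟩ : ∃ a : ℕ, |c a| < ε / 2 := by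
    have := (Metric.tendsto_atTop.1 hc0) (ε / 2) (half_pos hε)
    obtain ⟨N, hN⟩ := this
    exact ⟨N, by simpa [Real.dist_eq] using hN N le_rfl⟩
  refine ⟨max 1 (Nat.ceil ((2 * a) / ε) + 1), fun n hn => ?_⟩
  have hn1 : 1 ≤ n := le_trans (le_max_left _ _) hn
  have hnpos : (0:ℝ) < n := by exact_mod_cast hn1
  have hfnn : 0 ≤ ∫ ω, (T (tauInv T n ω) ω : ℝ)^2 ∂μ :=
    integral_nonneg fun ω => by positivity
  have hexpr_nn : 0 ≤ (1 / (n:ℝ)) * ∫ ω, (T (tauInv T n ω) ω : ℝ)^2 ∂μ := by positivity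
  rw [Real.dist_eq, sub_zero, abs_of_nonneg hexpr_nn]
  have han : (a:ℝ) / n < ε / 2 := by
    have hn2 : Nat.ceil ((2 * a) / ε) + 1 ≤ n := le_trans (le_max_right _ _) hn
    have : (2 * (a:ℝ)) / ε < n := by
      have h1 : ((2 * a : ℝ)) / ε ≤ Nat.ceil ((2 * (a:ℝ)) / ε) := Nat.le_ceil _
      have h2 : ((Nat.ceil ((2 * (a:ℝ)) / ε) : ℝ)) + 1 ≤ n := by exact_mod_cast hn2
      linarith
    have h2a : 2 * (a:ℝ) < (n:ℝ) * ε := (div_lt_iff₀ hε).1 this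
    rw [div_lt_div_iff₀ hnpos (by norm_num : (0:ℝ) < 2)]
    nlinarith
  calc (1 / (n:ℝ)) * ∫ ω, (T (tauInv T n ω) ω : ℝ)^2 ∂μ
      ≤ (1 / (n:ℝ)) * ((a:ℝ) + (n:ℝ) * c a) := by
        apply mul_le_mul_of_nonneg_left (key a n hn1) (by positivity)
    _ = (a:ℝ) / n + c a := by field_simp
    _ < ε / 2 + ε / 2 := by
        have : c a < ε / 2 := lt_of_le_of_lt (le_abs_self _) ha
        linarith
    _ = ε := by ring
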